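/- Let L ⊆ L∞₊ := L⁰₊ ∩ L∞ be convex and solid (0 ≤ f ≤ h a.s. with h ∈ L implies f ∈ L) with 1 ∈ L, and define J := ⋃_{α ≥ 0} { α(f − 1) : f ∈ L }. Then J = J − L∞₊, i.e., for every φ ∈ J and h ∈ L∞₊, φ − h ∈ J. -/

import Mathlib

open MeasureTheory Filter Set

noncomputable section

variable {Ω : Type*} [MeasurableSpace Ω]

/-- The nonnegative orthant `L⁰₊` of `L⁰`: (a.e. classes of) random variables that are
a.e. nonnegative.  We work with representatives, requiring a.e.-measurability. -/
def L0plus (P : Measure Ω) : Set (Ω → ℝ) :=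
  {f | AEMeasurable f P ∧ 0 ≤ᵐ[P] f}

/-- A set `A ⊆ L⁰₊` is bounded (in probability) if `lim_{ℓ→∞} sup_{f∈A} P[f>ℓ] = 0`. -/
def BoundedInProb (P : Measure Ω) (A : Set (Ω → ℝ)) : Prop :=
  Tendsto (fun ℓ : ℝ => ⨆ f ∈ A, P {ω | ℓ < f ω}) atTop (nhds 0)

/-- A set `K` is closed in probability: it contains every (a.e.-measurable) limit in
measure of sequences from `K`.  (Convergence in probability is metrizable, so sequential
closedness is closedness.) -/
def ClosedInProb (P : Measure Ω) (K : Set (Ω → ℝ)) : Prop :=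
  ∀ (f : ℕ → Ω → ℝ) (g : Ω → ℝ), (∀ n, f n ∈ K) → AEMeasurable g P →
    TendstoInMeasure P f atTop g → g ∈ K

/-- `g` is strictly positive on `C`: `P[f > 0, g = 0] = 0` for every `f ∈ C`. -/
def StrictlyPositiveOn (P : Measure Ω) (C : Set (Ω → ℝ)) (g : Ω → ℝ) : Prop :=
  ∀ f ∈ C, P ({ω | 0 < f ω} ∩ {ω | g ω = 0}) = 0

/-- `Q` is a probability measure equivalent to `P`. -/
def EquivProb (P Q : Measure Ω) : Prop :=
  IsProbabilityMeasure Q ∧ Q ≪ P ∧ P ≪ Q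

/-- `g` is a numéraire of `C`: it is strictly positive on `C` and there is an equivalent
probability `Q` with `E_Q[(f/g)·1_{g>0}] ≤ Q[g>0]` for all `f ∈ C`. -/
def IsNumeraire (P : Measure Ω) (C : Set (Ω → ℝ)) (g : Ω → ℝ) : Prop :=
  StrictlyPositiveOn P C g ∧
    ∃ Q : Measure Ω, EquivProb P Q ∧
      ∀ f ∈ C, (∫⁻ ω in {ω | 0 < g ω}, ENNReal.ofReal (f ω / g ω) ∂Q) ≤ Q {ω | 0 < g ω}

/-- The class `CS_g(C)` of subsets `K` of `L⁰₊` with (CS1) `C ⊆ K`, (CS2) `K` convex and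
closed in probability, (CS3) `f ∈ K`, `δ ≥ 0`, `(1+δ)f − δg ∈ L⁰₊` imply `(1+δ)f − δg ∈ K`. -/
def CSclass (P : Measure Ω) (C : Set (Ω → ℝ)) (g : Ω → ℝ) : Set (Set (Ω → ℝ)) :=
  {K | K ⊆ L0plus P ∧ C ⊆ K ∧ Convex ℝ K ∧ ClosedInProb P K ∧
    ∀ f ∈ K, ∀ δ : ℝ, 0 ≤ δ →
      (fun ω => (1 + δ) * f ω - δ * g ω) ∈ L0plus P →
      (fun ω => (1 + δ) * f ω - δ * g ω) ∈ K}

/-- `cs_g(C)`, the smallest element of `CS_g(C)`. -/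
def csSet (P : Measure Ω) (C : Set (Ω → ℝ)) (g : Ω → ℝ) : Set (Ω → ℝ) :=
  ⋂ K ∈ CSclass P C g, K

/-- The solid hull of `K` in `L⁰₊`. -/
def SolidHull (P : Measure Ω) (K : Set (Ω → ℝ)) : Set (Ω → ℝ) :=
  {f | f ∈ L0plus P ∧ ∃ h ∈ K, f ≤ᵐ[P] h}

/-- `L∞`: essentially bounded (a.e.-measurable) random variables. -/
def Linf (P : Measure Ω) : Set (Ω → ℝ) :=
  {f | AEMeasurable f P ∧ ∃ c : ℝ, ∀ᵐ ω ∂P, |f ω| ≤ c}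

/-- `L∞₊ = L⁰₊ ∩ L∞`. -/
def LinfPlus (P : Measure Ω) : Set (Ω → ℝ) := L0plus P ∩ Linf P

/-- `L` is solid: `0 ≤ u ≤ h` a.s. with `h ∈ L` implies `u ∈ L`. -/
def IsSolid (P : Measure Ω) (L : Set (Ω → ℝ)) : Prop :=
  ∀ u : Ω → ℝ, AEMeasurable u P → 0 ≤ᵐ[P] u → (∃ h ∈ L, u ≤ᵐ[P] h) → u ∈ L

/-- `A_α := α (L − 1) = { α(f − 1) : f ∈ L }`. -/
def Aset (L : Set (Ω → ℝ)) (α : ℝ) : Set (Ω → ℝ) :=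
  (fun f : Ω → ℝ => fun ω => α * (f ω - 1)) '' L

/-- `J := ⋃_{α ≥ 0} A_α`. -/
def Jset (L : Set (Ω → ℝ)) : Set (Ω → ℝ) := ⋃ α ∈ Ici (0 : ℝ), Aset L α

/-- The weak* topology on (representatives of) `L∞`, viewed as the dual of `L¹(P)`:
the topology induced by the maps `φ ↦ ∫ φ·u dP` for integrable `u`. -/
def weakStarTop (P : Measure Ω) : TopologicalSpace (Ω → ℝ) :=
  ⨅ (u : Ω → ℝ) (_ : Integrable u P),
    TopologicalSpace.induced (fun φ : Ω → ℝ => ∫ ω, φ ω * u ω ∂P) inferInstance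

/-- The witness set `K := { h ∈ L⁰₊ : P[h>0, g=0]=0 and E_Q[(h/g)·1_{g>0}] ≤ Q[g>0] }`. -/
def Kwitness (P Q : Measure Ω) (g : Ω → ℝ) : Set (Ω → ℝ) :=
  {h | h ∈ L0plus P ∧ P ({ω | 0 < h ω} ∩ {ω | g ω = 0}) = 0 ∧
    (∫⁻ ω in {ω | 0 < g ω}, ENNReal.ofReal (h ω / g ω) ∂Q) ≤ Q {ω | 0 < g ω}}

/-- The set `C` of the example: outcomes `1 − θ₁ + (θ₁ + θ₂)ξ` for `θ` in the constraint
set `Θ = { θ ∈ ℝ₊² : θ₂ ≤ √θ₁ ≤ 1 }`. -/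
def exampleC (ξ : Ω → ℝ) : Set (Ω → ℝ) :=
  {f | ∃ θ : ℝ × ℝ, (0 ≤ θ.1 ∧ 0 ≤ θ.2 ∧ θ.2 ≤ Real.sqrt θ.1 ∧ Real.sqrt θ.1 ≤ 1) ∧
    f = fun ω => 1 - θ.1 + (θ.1 + θ.2) * ξ ω}

/-- if `L ⊆ L∞₊` is convex and solid with `1 ∈ L`, then `J = J − L∞₊`,
i.e. `φ − h ∈ J` for every `φ ∈ J` and `h ∈ L∞₊`. -/
theorem Jset_sub_LinfPlus_subset
    (P : Measure Ω) [IsProbabilityMeasure P]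
    (L : Set (Ω → ℝ)) (hL : L ⊆ LinfPlus P) (hconv : Convex ℝ L)
    (hsolid : IsSolid P L) (h1 : (fun _ => (1 : ℝ)) ∈ L) :
    ∀ φ ∈ Jset L, ∀ h ∈ LinfPlus P, φ - h ∈ Jset L := by
  intro φ hφ h hh
  obtain ⟨⟨hmeas, hpos⟩, _, c, hc⟩ := hh
  simp only [Jset, Aset, mem_iUnion, mem_image, mem_Ici] at hφ ⊢
  obtain ⟨α, hα, f, hfL, hφeq⟩ := hφ
  obtain ⟨⟨hfmeas, hfpos⟩, _⟩ := hL hfL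
  set β : ℝ := α + max c 0 + 1 with hβ
  have hβpos : 0 < β := by positivity
  set g : Ω → ℝ := fun ω => 1 + (α * (f ω - 1) - h ω) / β with hg
  have hgmeas : AEMeasurable g P := by
    apply AEMeasurable.const_add
    exact ((aemeasurable_const.mul (hfmeas.sub aemeasurable_const)).sub hmeas).div_const _
  have hgpos : 0 ≤ᵐ[P] g := by
    filter_upwards [hfpos, hc] with ω h1 h2
    simp only [Pi.zero_apply] at h1 ⊢
    have h3 : h ω ≤ max c 0 := le_trans (le_abs_self _) (le_trans h2 (le_max_left _ _))
    have : 0 ≤ α * f ω := mul_nonneg hα h1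
    have hnum : -β < α * (f ω - 1) - h ω := by nlinarith
    have : -1 < (α * (f ω - 1) - h ω) / β := by
      rw [neg_lt, ← neg_div]
      exact (div_lt_one hβpos).mpr (by linarith)
    simp only [hg]; linarith
  have hab : (0:ℝ) ≤ α / β := div_nonneg hα hβpos.le
  have hab2 : (0:ℝ) ≤ 1 - α / β := by
    have : α / β ≤ 1 := (div_le_one hβpos).mpr (by have := le_max_right c 0; linarith)
    linarith
  have hcomb : (α / β) • f + (1 - α / β) • (fun _ => (1:ℝ)) ∈ L :=
    hconv hfL h1 hab hab2 (by ring)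
  have hgle : g ≤ᵐ[P] (α / β) • f + (1 - α / β) • (fun _ => (1:ℝ)) := by
    filter_upwards [hpos] with ω h1
    simp only [Pi.zero_apply] at h1
    simp only [hg, Pi.add_apply, Pi.smul_apply, smul_eq_mul, mul_one]
    have : (α * (f ω - 1) - h ω) / β ≤ (α * (f ω - 1)) / β := by
      gcongr
      linarith
    have h4 : (α * (f ω - 1)) / β = α / β * f ω - α / β := by ring
    linarith [this, (by ring : α * (f ω - 1) / β = α / β * f ω - α / β)]
  have hgL : g ∈ L := hsolid g hgmeas hgpos ⟨_, hcomb, hgle⟩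
  refine ⟨β, hβpos.le, g, hgL, ?_⟩
  funext ω
  have : (φ - h) ω = α * (f ω - 1) - h ω := by
    rw [← hφeq]; simp
  rw [this]
  simp only [hg]
  field_simp
  ring


end
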